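/- Fix ρ > 1 and let F_ρ := { (ρe^{iθ} + ρ^{−1}e^{−iθ})/(ρ + ρ^{−1}) : θ ∈ [0, 2π] } be the ellipse with vertices ±1 and co-vertices ±i(ρ−ρ^{−1})/(ρ+ρ^{−1}). If P is a complex polynomial of degree at most n such that |P(z)| ≤ 1 for all z ∈ F_ρ, then |P(1+ε)| ≤ (1 + (3(ρ²+1)/(2(ρ²−1)))·ε)^n for all 0 < ε < 1. -/

import Mathlib

set_option maxHeartbeats 1600000 in
lemma stmt12_real (ρ ε : ℝ) (hρ : 1 < ρ) (hε0 : 0 < ε) (hε1 : ε < 1) :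
    ∃ t : ℝ, 0 < t ∧ ρ ≤ t ∧ t + t⁻¹ = (1+ε)*(ρ+ρ⁻¹) ∧
      t ≤ ρ * (1 + 3*(ρ^2+1)/(2*(ρ^2-1)) * ε) := by
  have hρ0 : (0:ℝ) < ρ := lt_trans one_pos hρ
  set r : ℝ := ρ⁻¹ with hr
  clear_value r
  have hr0 : 0 < r := by rw [hr]; positivity
  have hrρ : ρ * r = 1 := by rw [hr]; exact mul_inv_cancel₀ hρ0.ne'
  have hr1 : r < 1 := by nlinarith
  have hρ2 : (0:ℝ) < ρ^2 - 1 := by nlinarith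
  set C : ℝ := 3*(ρ^2+1)/(2*(ρ^2-1)) with hC
  clear_value C
  have hC0 : 0 < C := by rw [hC]; positivity
  have hCkey : C * (ρ - r) = 3/2 * (ρ + r) := by
    rw [hC]
    rw [div_mul_eq_mul_div, div_eq_iff (by positivity)]
    nlinarith [hrρ]
  set s : ℝ := ρ + r with hs
  clear_value s
  have hs2 : 2 < s := by nlinarith [sq_nonneg (ρ - 1)]
  set A : ℝ := (1 + ε) * s with hA
  clear_value A
  have hA2 : 2 < A := by nlinarith
  have hD : 0 < A^2 - 4 := by nlinarith
  have hq := Real.sq_sqrt hD.le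
  set q : ℝ := Real.sqrt (A^2 - 4) with hqdef
  clear_value q
  have hq0 : 0 ≤ q := by rw [hqdef]; positivity
  set t : ℝ := (A + q) / 2 with ht
  clear_value t
  have hts : ρ - r ≤ q := by
    have h1 : (ρ - r)^2 ≤ A^2 - 4 := by
      rw [hA, hs]
      nlinarith [hrρ, hε0.le, mul_nonneg hε0.le (sq_nonneg (ρ+r))]
    calc ρ - r = Real.sqrt ((ρ - r)^2) := by
          rw [Real.sqrt_sq (by nlinarith)]
      _ ≤ q := by rw [hqdef]; exact Real.sqrt_le_sqrt h1
  have htρ : ρ ≤ t := by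
    have hsA : s ≤ A := by nlinarith
    rw [ht]; rw [hs] at hsA; linarith
  have ht0 : 0 < t := lt_of_lt_of_le hρ0 htρ
  have htroot : t^2 - A * t + 1 = 0 := by
    rw [ht]; linear_combination hq / 4
  have htA : t + t⁻¹ = A := by
    have h0 : t * (A - t) = 1 := by linear_combination -htroot
    have h1 : t⁻¹ = A - t := inv_eq_of_mul_eq_one_right h0
    rw [h1]; ring
  refine ⟨t, ht0, htρ, htA, ?_⟩
  set B : ℝ := ρ * (1 + C * ε) with hB
  clear_value B
  have hB1 : 1 < B := by rw [hB]; nlinarith [mul_pos hC0 hε0]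
  have hB0 : 0 < B := lt_trans one_pos hB1
  have hBinv : (1 - C * ε) * r ≤ B⁻¹ := by
    rw [← sub_nonneg]
    have h2 : B⁻¹ - (1 - C*ε) * r = (C*ε)^2 * r / (1 + C*ε) := by
      rw [hB]
      rw [mul_inv, ← hr]
      field_simp
      ring
    rw [h2]; positivity
  have hAB : A ≤ B + B⁻¹ := by
    have h3 : s + C * ε * (ρ - r) ≤ B + B⁻¹ := by
      have : B + (1 - C*ε) * r = s + C * ε * (ρ - r) := by rw [hB, hs]; ring
      linarith [hBinv]
    have h4 : A ≤ s + C * ε * (ρ - r) := by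
      rw [hA]
      have h5 : C * ε * (ρ - r) = 3/2 * s * ε := by
        rw [show C * ε * (ρ - r) = C * (ρ - r) * ε by ring, hCkey]
      rw [h5]
      nlinarith [mul_nonneg hε0.le (by linarith : (0:ℝ) ≤ s)]
    linarith
  have hBB : 0 ≤ B - B⁻¹ := by
    have : B⁻¹ ≤ 1 := by rw [inv_le_one_iff₀]; right; exact hB1.le
    linarith
  have hq' : q ≤ B - B⁻¹ := by
    have hBi : B * B⁻¹ = 1 := mul_inv_cancel₀ hB0.ne'
    have h1 : A^2 - 4 ≤ (B - B⁻¹)^2 := by nlinarith [hBi]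
    calc q ≤ Real.sqrt ((B - B⁻¹)^2) := by rw [hqdef]; exact Real.sqrt_le_sqrt h1
      _ = B - B⁻¹ := Real.sqrt_sq hBB
  rw [ht]; rw [hB] at hq' hAB ⊢; linarith

set_option maxHeartbeats 1600000 in
/-- Fix ρ > 1 and let F_ρ := { (ρe^{iθ} + ρ^{−1}e^{−iθ})/(ρ + ρ^{−1}) :
θ ∈ [0, 2π] } be the ellipse with vertices ±1 and co-vertices ±i(ρ−ρ^{−1})/(ρ+ρ^{−1}).
If P is a complex polynomial of degree at most n such that |P(z)| ≤ 1 for all z ∈ F_ρ,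
then |P(1+ε)| ≤ (1 + (3(ρ²+1)/(2(ρ²−1)))·ε)^n for all 0 < ε < 1. -/
theorem stmt_12
    (ρ : ℝ) (hρ : 1 < ρ)
    (n : ℕ) (P : Polynomial ℂ) (hdeg : P.degree ≤ n)
    (hbound : ∀ z ∈ (fun θ : ℝ =>
        ((ρ : ℂ) * Complex.exp (Complex.I * θ)
          + (ρ : ℂ)⁻¹ * Complex.exp (-(Complex.I * θ))) / ((ρ : ℂ) + (ρ : ℂ)⁻¹)) ''
        Set.Icc (0 : ℝ) (2 * Real.pi),
      ‖P.eval z‖ ≤ 1)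
    (ε : ℝ) (hε0 : 0 < ε) (hε1 : ε < 1) :
    ‖P.eval (1 + (ε : ℂ))‖ ≤ (1 + 3 * (ρ ^ 2 + 1) / (2 * (ρ ^ 2 - 1)) * ε) ^ n := by
  classical
  obtain ⟨t, ht0, htρ, htA, htB⟩ := stmt12_real ρ ε hρ hε0 hε1
  have hρ0 : (0:ℝ) < ρ := lt_trans one_pos hρ
  have hρne : (ρ:ℂ) ≠ 0 := by exact_mod_cast hρ0.ne'
  have hde : P.natDegree < n + 1 :=
    Nat.lt_succ_of_le (Polynomial.natDegree_le_iff_degree_le.mpr hdeg)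
  have hρ2ne : ((ρ:ℂ)^2 + 1) ≠ 0 := by
    have h : ((ρ:ℂ)^2 + 1) = ((ρ^2 + 1 : ℝ) : ℂ) := by push_cast; ring
    rw [h]
    exact_mod_cast (by positivity : (0:ℝ) < ρ^2+1).ne'
  set R : Polynomial ℂ := ∑ k ∈ Finset.range (n+1),
      Polynomial.C (P.coeff k / ((ρ:ℂ)^2+1)^k) * Polynomial.X^(n-k)
        * (Polynomial.C ((ρ:ℂ)^2) + Polynomial.X^2)^k with hR
  have hRval : ∀ w : ℂ, w ≠ 0 →
      R.eval w = w^n * P.eval (((ρ:ℂ)^2 + w^2)/(((ρ:ℂ)^2+1) * w)) := by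
    intro w hw
    rw [hR]
    simp only [Polynomial.eval_finset_sum, Polynomial.eval_mul, Polynomial.eval_pow,
      Polynomial.eval_C, Polynomial.eval_X, Polynomial.eval_add]
    rw [Polynomial.eval_eq_sum_range' hde, Finset.mul_sum]
    refine Finset.sum_congr rfl fun k hk => ?_
    have hkn : k ≤ n := Nat.lt_succ_iff.mp (Finset.mem_range.mp hk)
    have hwn : w^n = w^(n-k) * w^k := by rw [← pow_add, Nat.sub_add_cancel hkn]
    rw [hwn]
    rw [div_pow, mul_pow]
    field_simp
  -- bound on the unit circle
  have hcirc : ∀ w : ℂ, ‖w‖ = 1 → ‖R.eval w‖ ≤ 1 := by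
    intro w hw
    have hwne : w ≠ 0 := by
      intro h; rw [h] at hw; simp at hw
    set z : ℂ := ((ρ:ℂ)^2 + w^2)/(((ρ:ℂ)^2+1) * w) with hz
    have hzmem : z ∈ (fun θ : ℝ =>
        ((ρ : ℂ) * Complex.exp (Complex.I * θ)
          + (ρ : ℂ)⁻¹ * Complex.exp (-(Complex.I * θ))) / ((ρ : ℂ) + (ρ : ℂ)⁻¹)) ''
        Set.Icc (0 : ℝ) (2 * Real.pi) := by
      have hwinv : ‖w⁻¹‖ = 1 := by rw [norm_inv, hw]; norm_num
      set θ₀ : ℝ := Complex.arg w⁻¹ with hθ₀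
      have hexp0 : Complex.exp (Complex.I * θ₀) = w⁻¹ := by
        have h := Complex.norm_mul_exp_arg_mul_I w⁻¹
        rw [hwinv] at h
        rw [mul_comm]
        simpa using h
      have harg := Complex.arg_mem_Ioc w⁻¹
      have hπ := Real.pi_pos
      set θ : ℝ := if 0 ≤ θ₀ then θ₀ else θ₀ + 2 * Real.pi with hθ
      have hθmem : θ ∈ Set.Icc (0:ℝ) (2 * Real.pi) := by
        rw [hθ]; split_ifs with h
        · exact ⟨h, by have := harg.2; rw [← hθ₀] at this; linarith⟩
        · push_neg at h
          exact ⟨by have := harg.1; rw [← hθ₀] at this; linarith, by linarith⟩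
      have hexp : Complex.exp (Complex.I * θ) = w⁻¹ := by
        rw [hθ]; split_ifs with h
        · exact hexp0
        · push_cast
          rw [mul_add, Complex.exp_add, hexp0,
            show Complex.I * (2 * (Real.pi:ℂ)) = 2 * (Real.pi:ℂ) * Complex.I by ring,
            Complex.exp_two_pi_mul_I, mul_one]
      refine ⟨θ, hθmem, ?_⟩
      have hexp' : Complex.exp (-(Complex.I * θ)) = w := by
        rw [Complex.exp_neg, hexp, inv_inv]
      simp only
      rw [hexp, hexp', hz]
      have hsne : (ρ:ℂ) + (ρ:ℂ)⁻¹ ≠ 0 := by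
        have h : (ρ:ℂ) + (ρ:ℂ)⁻¹ = ((ρ + ρ⁻¹ : ℝ) : ℂ) := by push_cast; ring
        rw [h]
        exact_mod_cast (by positivity : (0:ℝ) < ρ + ρ⁻¹).ne'
      rw [div_eq_div_iff hsne (mul_ne_zero hρ2ne hwne)]
      field_simp
    have h1 := hbound z hzmem
    rw [hRval w hwne, norm_mul, norm_pow, hw, one_pow, one_mul, ← hz]
    exact h1
  -- maximum modulus principle
  have hball : ∀ w : ℂ, ‖w‖ ≤ 1 → ‖R.eval w‖ ≤ 1 := by
    intro w hw
    exact Complex.norm_le_of_forall_mem_frontier_norm_le (U := Metric.ball (0:ℂ) 1)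
      Metric.isBounded_ball (R.differentiable.diffContOnCl)
      (fun z hz => by
        rw [frontier_ball _ one_ne_zero, mem_sphere_zero_iff_norm] at hz
        exact hcirc z hz)
      (by
        rw [closure_ball _ one_ne_zero, Metric.mem_closedBall, dist_zero_right]
        exact hw)
  -- evaluate at w₁ = ρ / t
  set w₁ : ℂ := ((ρ / t : ℝ) : ℂ) with hw₁
  have hw₁0 : w₁ ≠ 0 := by
    rw [hw₁]
    exact_mod_cast (by positivity : (0:ℝ) < ρ / t).ne'
  have habs : ‖w₁‖ = ρ / t := by
    rw [hw₁, Complex.norm_real, Real.norm_eq_abs, abs_of_pos (by positivity)]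
  have hw₁le : ‖w₁‖ ≤ 1 := by
    rw [habs, div_le_one ht0]; exact htρ
  have hz₁ : ((ρ:ℂ)^2 + w₁^2)/(((ρ:ℂ)^2+1) * w₁) = 1 + (ε:ℂ) := by
    have htne : t ≠ 0 := ht0.ne'
    have hreal : ρ^2 + (ρ/t)^2 = (1 + ε) * ((ρ^2+1) * (ρ/t)) := by
      have e1 : t * t⁻¹ = 1 := mul_inv_cancel₀ htne
      have e2 : ρ * ρ⁻¹ = 1 := mul_inv_cancel₀ hρ0.ne'
      have hclear : ρ^2*t^2 + ρ^2 = (1+ε)*((ρ^2+1)*(ρ*t)) := by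
        linear_combination (ρ^2*t)*htA - ρ^2*e1 + ((1+ε)*ρ*t)*e2
      rw [div_eq_mul_inv]
      linear_combination t⁻¹^2 * hclear + (-ρ^2*(t*t⁻¹+1) + (1+ε)*(ρ^2+1)*ρ*t⁻¹) * e1
    rw [div_eq_iff (mul_ne_zero hρ2ne hw₁0), hw₁]
    push_cast
    exact_mod_cast congrArg (fun x : ℝ => (x:ℂ)) hreal
  have hRw₁ := hRval w₁ hw₁0
  rw [hz₁] at hRw₁
  have hfin := hball w₁ hw₁le
  rw [hRw₁, norm_mul, norm_pow, habs] at hfin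
  have h2 : ‖P.eval (1 + (ε:ℂ))‖ ≤ (t/ρ)^n := by
    have hpos : (0:ℝ) < (ρ/t)^n := by positivity
    rw [← le_div_iff₀' hpos] at hfin
    calc ‖P.eval (1 + (ε:ℂ))‖ ≤ 1 / (ρ/t)^n := hfin
      _ = (t/ρ)^n := by rw [one_div, ← inv_pow, inv_div]
  calc ‖P.eval (1 + (ε:ℂ))‖ ≤ (t/ρ)^n := h2
    _ ≤ (1 + 3 * (ρ ^ 2 + 1) / (2 * (ρ ^ 2 - 1)) * ε) ^ n := by
        apply pow_le_pow_left₀ (by positivity)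
        rw [div_le_iff₀ hρ0]
        calc t ≤ ρ * (1 + 3*(ρ^2+1)/(2*(ρ^2-1)) * ε) := htB
          _ = (1 + 3 * (ρ ^ 2 + 1) / (2 * (ρ ^ 2 - 1)) * ε) * ρ := by ring
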